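/- For k, h > 0 and q ∈ ℝⁿ, the set D_q(k,h) = { y ∈ ℝⁿ : (|q|²+k)(|y|²+k) ≤ (⟨q,y⟩ + √(k(k+h)))² } is an ellipsoid centered at √((k+h)/k)·q, congruent after translation and rotation to { y : k y₁²/(h(|q|²+k)) + (y₂²+⋯+yₙ²)/h ≤ 1 }, and its n-dimensional volume is (1/√k)·h^{n/2}·√(|q|²+k)·ω_n. -/

import Mathlib

open Finset MeasureTheory Real
open scoped RealInnerProductSpace

set_option maxHeartbeats 1000000 in
private lemma stmt14_aux_div (h B A S : ℝ) (hh : 0 < h) :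
    A * h + h * B * S ≤ h * B * h ↔ A + B * S ≤ B * h := by
  rw [show A * h + h * B * S = (A + B * S) * h by ring, show h * B * h = (B * h) * h by ring]
  exact mul_le_mul_iff_of_pos_right hh

set_option maxHeartbeats 1000000 in
/-- `D_q(k,h) = {y : (|q|²+k)(|y|²+k) ≤ (⟨q,y⟩+√(k(k+h)))²}` is an ellipsoid centered at
`√((k+h)/k)·q`, congruent (by a rotation and translation, i.e. an isometry) to the canonical
ellipsoid `k y₁²/(h(|q|²+k)) + (y₂²+⋯+yₙ²)/h ≤ 1`, with volume
`(1/√k) h^{n/2} √(|q|²+k) ω_n`. -/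
theorem stmt14 (n : ℕ) (hn : 1 ≤ n) (k h : ℝ) (hk : 0 < k) (hh : 0 < h)
    (q : EuclideanSpace ℝ (Fin n))
    (ω : ℝ) (hω : ω = (volume (Metric.ball (0 : EuclideanSpace ℝ (Fin n)) 1)).toReal)
    (D : Set (EuclideanSpace ℝ (Fin n)))
    (hD : D = {y | (‖q‖ ^ 2 + k) * (‖y‖ ^ 2 + k) ≤ (⟪q, y⟫ + Real.sqrt (k * (k + h))) ^ 2}) :
    (volume D).toReal = (1 / Real.sqrt k) * h ^ ((n : ℝ) / 2) * Real.sqrt (‖q‖ ^ 2 + k) * ω ∧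
    ∃ e : EuclideanSpace ℝ (Fin n) ≃ᵢ EuclideanSpace ℝ (Fin n),
      e '' {y | k * (y ⟨0, hn⟩) ^ 2 / (h * (‖q‖ ^ 2 + k)) +
              (∑ i ∈ Finset.univ.erase ⟨0, hn⟩, (y i) ^ 2) / h ≤ 1} = D ∧
      e 0 = Real.sqrt ((k + h) / k) • q := by
  classical
  set i0 : Fin n := ⟨0, hn⟩ with hi0
  set Q : ℝ := ‖q‖ ^ 2 + k with hQdef
  have hQ : 0 < Q := by positivity
  set α : ℝ := Real.sqrt ((k + h) / k) with hα
  set c : EuclideanSpace ℝ (Fin n) := α • q with hc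
  set E : Set (EuclideanSpace ℝ (Fin n)) :=
    {y | k * (y i0) ^ 2 / (h * Q) + (∑ i ∈ Finset.univ.erase i0, (y i) ^ 2) / h ≤ 1} with hEdef
  -- the rotation
  obtain ⟨R, hR⟩ : ∃ R : EuclideanSpace ℝ (Fin n) ≃ₗᵢ[ℝ] EuclideanSpace ℝ (Fin n),
      ∀ z, ⟪q, R z⟫ = ‖q‖ * z i0 := by
    rcases eq_or_ne q 0 with h0 | h0
    · exact ⟨LinearIsometryEquiv.refl ℝ _, fun z => by simp [h0]⟩
    · set u : EuclideanSpace ℝ (Fin n) := ‖q‖⁻¹ • q with hu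
      have hqn : ‖q‖ ≠ 0 := norm_ne_zero_iff.2 h0
      have hun : ‖u‖ = 1 := by
        rw [hu, norm_smul, norm_inv, norm_norm, inv_mul_cancel₀ hqn]
      set v : EuclideanSpace ℝ (Fin n) := EuclideanSpace.single i0 1 with hv
      have hvn : ‖v‖ = 1 := by simp [hv]
      obtain ⟨ρ, hρv, hρ⟩ : ∃ ρ : EuclideanSpace ℝ (Fin n) ≃ₗᵢ[ℝ] EuclideanSpace ℝ (Fin n),
          ρ v = u ∧ ∀ a b : EuclideanSpace ℝ (Fin n), ⟪ρ a, ρ b⟫ = ⟪a, b⟫ :=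
        ⟨Submodule.reflection (Submodule.span ℝ {v - u})ᗮ, Submodule.reflection_sub (by rw [hvn, hun]),
          fun a b => LinearIsometryEquiv.inner_map_map _ a b⟩
      refine ⟨ρ, fun z => ?_⟩
      have h2 : ⟪u, ρ z⟫ = ⟪v, z⟫ := by rw [← hρv, hρ]
      have h3 : ⟪q, ρ z⟫ = ‖q‖ * ⟪u, ρ z⟫ := by
        rw [hu, real_inner_smul_left]
        field_simp
      rw [h3, h2, hv]
      simp [EuclideanSpace.inner_single_left]
  have hα2 : α ^ 2 = (k + h) / k := Real.sq_sqrt (by positivity)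
  have hα2k : α ^ 2 * k = k + h := by rw [hα2]; field_simp
  have hαnn : 0 ≤ α := Real.sqrt_nonneg _
  have hkk : k * (k + h) = (k + h) / k * k ^ 2 := by field_simp
  have hαk : α * k = Real.sqrt (k * (k + h)) := by
    rw [hα, hkk, Real.sqrt_mul (by positivity), Real.sqrt_sq hk.le]
  have hnormsq : ∀ z : EuclideanSpace ℝ (Fin n),
      ‖z‖ ^ 2 = (z i0) ^ 2 + ∑ i ∈ Finset.univ.erase i0, (z i) ^ 2 := by
    intro z
    rw [EuclideanSpace.norm_eq, Real.sq_sqrt (by positivity),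
      ← Finset.add_sum_erase _ _ (Finset.mem_univ i0)]
    simp [sq_abs]
  -- membership transfer
  have hzmem : ∀ z, (c + R z) ∈ D ↔ z ∈ E := by
    intro z
    have hnz : ‖R z‖ = ‖z‖ := R.norm_map z
    have hin : ⟪q, R z⟫ = ‖q‖ * z i0 := hR z
    have hcc : ‖c + R z‖ ^ 2 = α ^ 2 * ‖q‖ ^ 2 + 2 * (α * (‖q‖ * z i0)) + ‖z‖ ^ 2 := by
      rw [norm_add_sq_real, hc, real_inner_smul_left, hin, hnz, norm_smul,
        Real.norm_eq_abs, abs_of_nonneg hαnn, mul_pow]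
    have hiq : ⟪q, c + R z⟫ = α * ‖q‖ ^ 2 + ‖q‖ * z i0 := by
      rw [inner_add_right, hc, real_inner_smul_right, real_inner_self_eq_norm_sq, hin]
    set t : ℝ := z i0 with ht
    set S : ℝ := ∑ i ∈ Finset.univ.erase i0, (z i) ^ 2 with hS
    have hzsq : ‖z‖ ^ 2 = t ^ 2 + S := hnormsq z
    have hkey : Q * ((α ^ 2 * ‖q‖ ^ 2 + 2 * (α * (‖q‖ * t)) + ‖z‖ ^ 2) + k)
        - (α * ‖q‖ ^ 2 + ‖q‖ * t + α * k) ^ 2 = (k * t ^ 2 + Q * S) - Q * h := by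
      rw [hzsq, hQdef]
      linear_combination (-(‖q‖ ^ 2 + k)) * hα2k
    have hEiff : z ∈ E ↔ k * t ^ 2 + Q * S ≤ Q * h := by
      rw [hEdef]
      simp only [Set.mem_setOf_eq, ← ht, ← hS]
      rw [div_add_div _ _ (by positivity) (by positivity), div_le_one (by positivity)]
      exact stmt14_aux_div h Q (k * t ^ 2) S hh
    rw [hD]
    simp only [Set.mem_setOf_eq, ← hQdef]
    rw [hcc, hiq, ← hαk, hEiff]
    constructor <;> intro hle <;> linarith [hkey]
  -- the isometry
  set e : EuclideanSpace ℝ (Fin n) ≃ᵢ EuclideanSpace ℝ (Fin n) :=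
    R.toIsometryEquiv.trans (IsometryEquiv.constVAdd c) with he
  have heapp : ∀ z, e z = c + R z := fun z => rfl
  have himg : e '' E = D := by
    ext y
    constructor
    · rintro ⟨z, hz, rfl⟩
      rw [heapp]
      exact (hzmem z).2 hz
    · intro hy
      refine ⟨R.symm (y - c), ?_, ?_⟩
      · have hy' : c + R (R.symm (y - c)) = y := by simp
        exact (hzmem _).1 (by rw [hy']; exact hy)
      · rw [heapp]; simp
  have he0 : e 0 = α • q := by rw [heapp]; simp [hc]
  -- the diagonal map T
  set d : Fin n → ℝ := fun i => if i = i0 then Real.sqrt (h * Q / k) else Real.sqrt h with hd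
  have hdpos : ∀ i, 0 < d i := by
    intro i
    rw [hd]
    by_cases hi : i = i0 <;> simp only [hi, if_true, if_false] <;> positivity
  set T : EuclideanSpace ℝ (Fin n) →ₗ[ℝ] EuclideanSpace ℝ (Fin n) :=
    { toFun := fun z => WithLp.toLp 2 (fun i => d i * z i)
      map_add' := fun x y => by
        ext i; simp [PiLp.add_apply, mul_add]
      map_smul' := fun m x => by
        ext i; simp [PiLp.smul_apply, smul_eq_mul, mul_left_comm] } with hT
  have hTapp : ∀ (z : EuclideanSpace ℝ (Fin n)) i, T z i = d i * z i := fun z i => rfl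
  have hTmem : ∀ z, T z ∈ E ↔ z ∈ Metric.closedBall (0 : EuclideanSpace ℝ (Fin n)) 1 := by
    intro z
    rw [Metric.mem_closedBall, dist_zero_right, hEdef]
    simp only [Set.mem_setOf_eq, hTapp]
    have hnorm1 : ‖z‖ ≤ 1 ↔ ‖z‖ ^ 2 ≤ 1 := by
      constructor <;> intro hle <;> nlinarith [norm_nonneg z]
    rw [hnorm1, hnormsq z]
    have hdi0 : d i0 ^ 2 = h * Q / k := by
      rw [hd]
      simp only [if_true]
      rw [Real.sq_sqrt (by positivity)]
    have hsum : ∑ i ∈ Finset.univ.erase i0, (d i * z i) ^ 2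
        = h * ∑ i ∈ Finset.univ.erase i0, (z i) ^ 2 := by
      rw [Finset.mul_sum]
      refine Finset.sum_congr rfl fun i hi => ?_
      have hi' : i ≠ i0 := Finset.ne_of_mem_erase hi
      rw [hd]
      simp only [hi', if_false]
      rw [mul_pow, Real.sq_sqrt hh.le]
    rw [hsum, mul_pow, hdi0]
    rw [show k * (h * Q / k * z i0 ^ 2) / (h * Q) = z i0 ^ 2 by field_simp,
      mul_div_assoc, mul_comm h ((∑ i ∈ Finset.univ.erase i0, (z i) ^ 2) / h),
      div_mul_cancel₀ _ hh.ne']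
  have hTE : E = ⇑T '' Metric.closedBall (0 : EuclideanSpace ℝ (Fin n)) 1 := by
    ext y
    constructor
    · intro hy
      have hTy : T (WithLp.toLp 2 (fun i => (d i)⁻¹ * y i)) = y := by
        ext i
        rw [hTapp]
        field_simp [(hdpos i).ne']
      refine ⟨WithLp.toLp 2 (fun i => (d i)⁻¹ * y i), ?_, hTy⟩
      rw [← hTmem, hTy]
      exact hy
    · rintro ⟨z, hz, rfl⟩
      exact (hTmem z).2 hz
  -- determinant of T
  have hdet : LinearMap.det T = ∏ i, d i := by
    have hmat : LinearMap.toMatrix (EuclideanSpace.basisFun (Fin n) ℝ).toBasis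
        (EuclideanSpace.basisFun (Fin n) ℝ).toBasis T = Matrix.diagonal d := by
      ext i j
      rw [LinearMap.toMatrix_apply]
      simp only [OrthonormalBasis.coe_toBasis, OrthonormalBasis.coe_toBasis_repr_apply,
        EuclideanSpace.basisFun_repr, EuclideanSpace.basisFun_apply]
      rw [hTapp, EuclideanSpace.single_apply]
      by_cases hij : i = j <;> simp [Matrix.diagonal_apply, hij]
    rw [← LinearMap.det_toMatrix (EuclideanSpace.basisFun (Fin n) ℝ).toBasis, hmat,
      Matrix.det_diagonal]
  have hprod : ∏ i, d i = Real.sqrt (h * Q / k) * Real.sqrt h ^ (n - 1) := by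
    have h1 : d i0 = Real.sqrt (h * Q / k) := by simp [hd]
    have h2 : (∏ x ∈ Finset.univ.erase i0, d x) = Real.sqrt h ^ (n - 1) := by
      rw [Finset.prod_congr rfl
          (fun x hx => show d x = Real.sqrt h by simp [hd, Finset.ne_of_mem_erase hx]),
        Finset.prod_const, Finset.card_erase_of_mem (Finset.mem_univ i0), Finset.card_univ,
        Fintype.card_fin]
    exact (Finset.mul_prod_erase _ _ (Finset.mem_univ i0)).symm.trans (by rw [h1, h2])
  -- volume computation
  haveI : Nontrivial (EuclideanSpace ℝ (Fin n)) := by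
    refine ⟨⟨EuclideanSpace.single i0 1, 0, fun hcon => ?_⟩⟩
    have h1 : ‖EuclideanSpace.single i0 (1:ℝ)‖ = 1 := by simp
    rw [hcon] at h1
    simp at h1
  have hBmeas : MeasurableSet (⇑T '' Metric.closedBall (0 : EuclideanSpace ℝ (Fin n)) 1) := by
    have hTc : Continuous T := T.continuous_of_finiteDimensional
    exact ((isCompact_closedBall _ _).image hTc).isClosed.measurableSet
  have hvol1 : volume D = volume (⇑T '' Metric.closedBall (0 : EuclideanSpace ℝ (Fin n)) 1) := by
    rw [← himg, hTE]
    have himg2 : ⇑e '' (⇑T '' Metric.closedBall 0 1)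
        = (fun y => c + y) '' (⇑R '' (⇑T '' Metric.closedBall 0 1)) := by
      conv_rhs => rw [Set.image_image]
      exact Set.image_congr fun x _ => heapp x
    have hpre : ⇑R '' (⇑T '' Metric.closedBall 0 1)
        = ⇑R.symm ⁻¹' (⇑T '' Metric.closedBall 0 1) := by
      ext w
      simp only [Set.mem_image, Set.mem_preimage]
      constructor
      · rintro ⟨x, hx, rfl⟩
        rw [LinearIsometryEquiv.symm_apply_apply]
        exact hx
      · intro hw
        exact ⟨R.symm w, hw, by simp⟩
    rw [himg2, Set.image_add_left, measure_preimage_add, hpre,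
      R.symm.measurePreserving.measure_preimage hBmeas.nullMeasurableSet]
  have hvol2 : volume (⇑T '' Metric.closedBall (0 : EuclideanSpace ℝ (Fin n)) 1)
      = ENNReal.ofReal |LinearMap.det T| * volume (Metric.closedBall (0 : EuclideanSpace ℝ (Fin n)) 1) :=
    Measure.addHaar_image_linearMap volume T _
  have hvol3 : volume (Metric.closedBall (0 : EuclideanSpace ℝ (Fin n)) 1)
      = volume (Metric.ball (0 : EuclideanSpace ℝ (Fin n)) 1) :=
    Measure.addHaar_closedBall_eq_addHaar_ball volume 0 1
  have habs : |LinearMap.det T| = Real.sqrt (h * Q / k) * Real.sqrt h ^ (n - 1) := by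
    rw [hdet, hprod]
    exact abs_of_nonneg (by positivity)
  have harith : Real.sqrt (h * Q / k) * Real.sqrt h ^ (n - 1)
      = 1 / Real.sqrt k * h ^ ((n : ℝ) / 2) * Real.sqrt Q := by
    have e1 : Real.sqrt (h * Q / k) = Real.sqrt h * Real.sqrt Q / Real.sqrt k := by
      rw [Real.sqrt_div (by positivity), Real.sqrt_mul hh.le]
    have e2 : Real.sqrt h * Real.sqrt h ^ (n - 1) = h ^ ((n : ℝ) / 2) := by
      have hpow : Real.sqrt h ^ n = Real.sqrt h * Real.sqrt h ^ (n - 1) := by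
        conv_lhs => rw [show n = 1 + (n - 1) by omega]
        rw [pow_add, pow_one]
      rw [← hpow, Real.sqrt_eq_rpow, ← Real.rpow_natCast (h ^ ((1:ℝ)/2)) n,
        ← Real.rpow_mul hh.le]
      congr 1
      ring
    calc Real.sqrt (h * Q / k) * Real.sqrt h ^ (n - 1)
        = (Real.sqrt h * Real.sqrt h ^ (n - 1)) * Real.sqrt Q / Real.sqrt k := by
          rw [e1]; ring
      _ = 1 / Real.sqrt k * h ^ ((n : ℝ) / 2) * Real.sqrt Q := by rw [e2]; ring
  have hfin : volume (Metric.ball (0 : EuclideanSpace ℝ (Fin n)) 1) ≠ ⊤ :=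
    measure_ball_lt_top.ne
  refine ⟨?_, e, himg, he0⟩
  rw [hvol1, hvol2, hvol3, ENNReal.toReal_mul, ENNReal.toReal_ofReal (abs_nonneg _), habs,
    harith, hω]
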